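/- For d > 2, let S = Σ_{i,j=1}^{d} E_{ij} ⊗ E_{ji}, F₀ = (I_{d²} − S)/√(2d(d−1)), and define the linear map φ_λ : M_{d²}(ℂ) → M_{d²}(ℂ) by φ_λ(a) = λ (tr(a) I_{d²} − F₀ a F₀) − F₀ a F₀, regarding the domain as M_d(ℂ) ⊗ M_d(ℂ). If 1/(d(d−1)−1) ≤ λ < 2/(d(d−1)−2), then φ_λ(p ⊗ q) is positive semidefinite for all rank-one orthogonal projections p, q ∈ M_d(ℂ) (hence φ_λ(σ) is positive semidefinite for every separable positive semidefinite σ ∈ M_d(ℂ) ⊗ M_d(ℂ)), yet φ_λ is not a positive map: there exists a positive semidefinite a ∈ M_{d²}(ℂ) such that φ_λ(a) is not positive semidefinite. -/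

import Mathlib

set_option linter.unusedSectionVars false
set_option maxHeartbeats 1000000

open scoped Kronecker ComplexOrder
open Matrix

/-- `p` is a rank-one orthogonal projection. -/
def IsRankOneProj {m : Type*} [Fintype m] [DecidableEq m]
    (p : Matrix m m ℂ) : Prop :=
  p.IsHermitian ∧ p * p = p ∧ p.trace = 1

/-- The swap operator `S = ∑ i j, E_{ij} ⊗ E_{ji}` on `ℂ^d ⊗ ℂ^d`. -/
noncomputable def swapMatrix (d : ℕ) :
    Matrix (Fin d × Fin d) (Fin d × Fin d) ℂ :=
  ∑ i : Fin d, ∑ j : Fin d,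
    Matrix.single i j (1 : ℂ) ⊗ₖ Matrix.single j i (1 : ℂ)

/-- `F₀ = (I − S) / √(2d(d−1))`. -/
noncomputable def F0 (d : ℕ) : Matrix (Fin d × Fin d) (Fin d × Fin d) ℂ :=
  (((Real.sqrt (2 * d * (d - 1)))⁻¹ : ℝ) : ℂ) • (1 - swapMatrix d)

/-- A matrix on `ℂ^d ⊗ ℂ^d` is separable if it is a finite sum of Kronecker products
of positive semidefinite matrices. -/
def SeparablePair {d : ℕ}
    (σ : Matrix (Fin d × Fin d) (Fin d × Fin d) ℂ) : Prop :=
  ∃ (m : ℕ) (σ₁ σ₂ : Fin m → Matrix (Fin d) (Fin d) ℂ),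
    (∀ t, (σ₁ t).PosSemidef) ∧ (∀ t, (σ₂ t).PosSemidef) ∧
    σ = ∑ t, σ₁ t ⊗ₖ σ₂ t

namespace PhiAux

open Complex

variable {n : Type*} [Fintype n] [DecidableEq n]

lemma mul_vecMulVec (M : Matrix n n ℂ) (a b : n → ℂ) :
    M * vecMulVec a b = vecMulVec (M *ᵥ a) b := by
  ext i j
  simp [mul_apply, vecMulVec_apply, mulVec, dotProduct, Finset.sum_mul, mul_assoc]

lemma vecMulVec_mul (M : Matrix n n ℂ) (a b : n → ℂ) :
    vecMulVec a b * M = vecMulVec a (Mᵀ *ᵥ b) := by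
  ext i j
  simp only [mul_apply, vecMulVec_apply, mulVec, dotProduct, transpose_apply, Finset.mul_sum]
  refine Finset.sum_congr rfl fun k _ => ?_
  ring

lemma transpose_mulVec_star (M : Matrix n n ℂ) (hM : Mᴴ = M) (w : n → ℂ) :
    Mᵀ *ᵥ (star w) = star (M *ᵥ w) := by
  funext j
  have h := fun k j => congrFun (congrFun hM k) j
  simp only [conjTranspose_apply] at h
  simp only [mulVec, dotProduct, Pi.star_apply, transpose_apply, star_sum, star_mul']
  exact Finset.sum_congr rfl fun k _ => by rw [← h k j]; try ring

lemma herm_mul_vecMulVec_mul (M : Matrix n n ℂ) (hM : Mᴴ = M) (w : n → ℂ) :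
    M * vecMulVec w (star w) * M = vecMulVec (M *ᵥ w) (star (M *ᵥ w)) := by
  rw [mul_vecMulVec, vecMulVec_mul, transpose_mulVec_star M hM]

lemma vecMulVec_mulVec (w x : n → ℂ) :
    vecMulVec w (star w) *ᵥ x = (star w ⬝ᵥ x) • w := by
  funext i
  simp only [vecMulVec_apply, mulVec, dotProduct, Pi.smul_apply, Pi.star_apply, smul_eq_mul,
    Finset.sum_mul]
  exact Finset.sum_congr rfl fun k _ => by ring

lemma form_vecMulVec (w x : n → ℂ) :
    star x ⬝ᵥ (vecMulVec w (star w) *ᵥ x) = ((normSq (star w ⬝ᵥ x) : ℝ) : ℂ) := by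
  rw [vecMulVec_mulVec, dotProduct_smul, smul_eq_mul, star_dotProduct, mul_comm]
  have h2 := Complex.mul_conj (star (star x ⬝ᵥ w))
  rw [starRingEnd_apply, star_star] at h2
  rw [mul_comm]; exact h2

lemma isHermitian_vecMulVec (w : n → ℂ) : (vecMulVec w (star w)).IsHermitian := by
  ext i j
  simp only [conjTranspose_apply, vecMulVec_apply, Pi.star_apply, star_mul', star_star]
  ring

lemma posSemidef_vecMulVec (w : n → ℂ) : (vecMulVec w (star w)).PosSemidef := by
  refine PosSemidef.of_dotProduct_mulVec_nonneg (isHermitian_vecMulVec w) fun x => ?_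
  rw [form_vecMulVec]
  exact Complex.zero_le_real.2 (normSq_nonneg _)

lemma trace_vecMulVec (w : n → ℂ) :
    (vecMulVec w (star w)).trace = ((∑ i, normSq (w i) : ℝ) : ℂ) := by
  simp only [trace, diag_apply, vecMulVec_apply, Pi.star_apply, Complex.ofReal_sum]
  exact Finset.sum_congr rfl fun i _ => (Complex.mul_conj _)

lemma dotProduct_star_self (w : n → ℂ) :
    star w ⬝ᵥ w = ((∑ i, normSq (w i) : ℝ) : ℂ) := by
  simp only [dotProduct, Pi.star_apply, Complex.ofReal_sum]
  exact Finset.sum_congr rfl fun i _ => by rw [mul_comm]; exact Complex.mul_conj _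

lemma cauchy_schwarz_normSq (w x : n → ℂ) :
    normSq (star w ⬝ᵥ x) ≤ (∑ i, normSq (w i)) * (∑ i, normSq (x i)) := by
  let W : EuclideanSpace ℂ n := WithLp.toLp 2 w
  let X : EuclideanSpace ℂ n := WithLp.toLp 2 x
  have hi : (inner ℂ W X : ℂ) = star w ⬝ᵥ x := by
    rw [PiLp.inner_apply]
    exact Finset.sum_congr rfl fun i _ => by
      rw [RCLike.inner_apply, starRingEnd_apply]; exact mul_comm _ _
  have hcs := norm_inner_le_norm (𝕜 := ℂ) W X
  have h1 : ‖W‖ ^ 2 = ∑ i, normSq (w i) := by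
    rw [EuclideanSpace.norm_eq, Real.sq_sqrt (by positivity)]
    exact Finset.sum_congr rfl fun i _ => (Complex.normSq_eq_norm_sq (w i)).symm
  have h2 : ‖X‖ ^ 2 = ∑ i, normSq (x i) := by
    rw [EuclideanSpace.norm_eq, Real.sq_sqrt (by positivity)]
    exact Finset.sum_congr rfl fun i _ => (Complex.normSq_eq_norm_sq (x i)).symm
  calc normSq (star w ⬝ᵥ x) = ‖(inner ℂ W X : ℂ)‖ ^ 2 := by rw [hi, Complex.normSq_eq_norm_sq]
    _ ≤ (‖W‖ * ‖X‖) ^ 2 := by apply pow_le_pow_left₀ (norm_nonneg _) hcs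
    _ = (∑ i, normSq (w i)) * (∑ i, normSq (x i)) := by rw [mul_pow, h1, h2]

lemma form_expand (α β : ℝ) (w x : n → ℂ) :
    star x ⬝ᵥ (((α : ℂ) • (1 : Matrix n n ℂ) - (β : ℂ) • vecMulVec w (star w)) *ᵥ x)
      = ((α * (∑ i, normSq (x i)) - β * normSq (star w ⬝ᵥ x) : ℝ) : ℂ) := by
  rw [sub_mulVec, dotProduct_sub, smul_mulVec, smul_mulVec, one_mulVec,
    dotProduct_smul, dotProduct_smul, dotProduct_star_self, form_vecMulVec,
    smul_eq_mul, smul_eq_mul, ← Complex.ofReal_mul, ← Complex.ofReal_mul,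
    ← Complex.ofReal_sub]

lemma psd_of_form (α β : ℝ) (hβ : 0 ≤ β) (w : n → ℂ)
    (h : β * ∑ i, normSq (w i) ≤ α) :
    ((α : ℂ) • (1 : Matrix n n ℂ) - (β : ℂ) • vecMulVec w (star w)).PosSemidef := by
  refine PosSemidef.of_dotProduct_mulVec_nonneg ?_ ?_
  · show _ᴴ = _
    rw [conjTranspose_sub, conjTranspose_smul, conjTranspose_smul, conjTranspose_one,
      (isHermitian_vecMulVec w).eq]
    simp [Complex.conj_ofReal]
  · intro x
    rw [form_expand, Complex.zero_le_real]
    have hcs := cauchy_schwarz_normSq w x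
    have hx : 0 ≤ ∑ i, normSq (x i) := Finset.sum_nonneg fun i _ => normSq_nonneg _
    nlinarith [mul_le_mul_of_nonneg_left hcs hβ, mul_le_mul_of_nonneg_right h hx]

lemma posSemidef_sum {ι : Type*} (s : Finset ι) (f : ι → Matrix n n ℂ)
    (h : ∀ i ∈ s, (f i).PosSemidef) : (∑ i ∈ s, f i).PosSemidef := by
  induction s using Finset.cons_induction with
  | empty => simpa using Matrix.PosSemidef.zero
  | cons a s ha ih =>
    rw [Finset.sum_cons]
    have h1 := h a (Finset.mem_cons_self a s)
    have h2 := ih fun i hi => h i (Finset.mem_cons_of_mem hi)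
    exact PosSemidef.of_dotProduct_mulVec_nonneg (h1.1.add h2.1) fun x => by
      rw [add_mulVec, dotProduct_add]
      exact add_nonneg (h1.dotProduct_mulVec_nonneg x) (h2.dotProduct_mulVec_nonneg x)

-- swap matrix lemmas
lemma swap_apply (d : ℕ) (x y : Fin d × Fin d) :
    swapMatrix d x y = if x.2 = y.1 ∧ x.1 = y.2 then 1 else 0 := by
  rcases x with ⟨a, b⟩; rcases y with ⟨c, e⟩
  simp only [swapMatrix, Finset.sum_apply, Matrix.sum_apply, kroneckerMap_apply,
    single, of_apply]
  rw [Finset.sum_comm]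
  rw [Finset.sum_eq_single b, Finset.sum_eq_single a]
  · by_cases h1 : a = e <;> by_cases h2 : b = c <;> simp [h1, h2, and_comm]
  · intro k _ hk
    by_cases h : k = e <;> simp [hk, h] <;> simp_all
  · simp
  · intro j _ hj
    apply Finset.sum_eq_zero
    intro i _
    by_cases h : j = c <;> simp [hj, h] <;> simp_all
  · simp

lemma swap_mulVec (d : ℕ) (w : Fin d × Fin d → ℂ) :
    swapMatrix d *ᵥ w = fun x => w (x.2, x.1) := by
  funext x
  simp only [mulVec, dotProduct, swap_apply]
  rw [Fintype.sum_prod_type]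
  rw [Finset.sum_eq_single x.2]
  · rw [Finset.sum_eq_single x.1]
    · simp
    · intro k _ hk; simp [Ne.symm hk]
    · simp
  · intro k _ hk
    apply Finset.sum_eq_zero
    intro l _
    simp [Ne.symm hk]
  · simp

lemma swap_conjTranspose (d : ℕ) : (swapMatrix d)ᴴ = swapMatrix d := by
  ext x y
  simp only [conjTranspose_apply, swap_apply]
  split_ifs with h1 h2 h3 <;> simp_all

lemma oneSubSwap_conjTranspose (d : ℕ) :
    (1 - swapMatrix d)ᴴ = 1 - swapMatrix d := by
  rw [conjTranspose_sub, conjTranspose_one, swap_conjTranspose]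

/-- The representation lemma: `φ_λ` applied to a rank-one `w w*`. -/
lemma rep (d : ℕ) (lam : ℝ) (w : Fin d × Fin d → ℂ) :
    (lam : ℂ) • (((vecMulVec w (star w)).trace)
          • (1 : Matrix (Fin d × Fin d) (Fin d × Fin d) ℂ)
        - F0 d * vecMulVec w (star w) * F0 d) - F0 d * vecMulVec w (star w) * F0 d
    = ((lam * ∑ x, normSq (w x) : ℝ) : ℂ) • 1
      - (((lam + 1) * ((Real.sqrt (2 * d * (d - 1)))⁻¹) ^ 2 : ℝ) : ℂ) •
        vecMulVec ((1 - swapMatrix d) *ᵥ w) (star ((1 - swapMatrix d) *ᵥ w)) := by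
  have hF : F0 d * vecMulVec w (star w) * F0 d
      = ((((Real.sqrt (2 * d * (d - 1)))⁻¹) ^ 2 : ℝ) : ℂ) •
        vecMulVec ((1 - swapMatrix d) *ᵥ w) (star ((1 - swapMatrix d) *ᵥ w)) := by
    rw [F0, smul_mul_assoc, smul_mul_assoc, mul_smul_comm, smul_smul,
      herm_mul_vecMulVec_mul _ (oneSubSwap_conjTranspose d)]
    rw [← Complex.ofReal_mul, ← sq]
  rw [hF, trace_vecMulVec]
  push_cast
  module


lemma sum_normSq_sub_swap (d : ℕ) (u v : Fin d → ℂ) :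
    (∑ x : Fin d × Fin d, normSq ((u x.1 * v x.2) - (u x.2 * v x.1)))
      ≤ 2 * ∑ x : Fin d × Fin d, normSq (u x.1 * v x.2) := by
  have hpt : ∀ x : Fin d × Fin d, normSq ((u x.1 * v x.2) - (u x.2 * v x.1))
      = normSq (u x.1 * v x.2) + normSq (u x.2 * v x.1)
        - 2 * ((u x.1 * v x.2) * (starRingEnd ℂ) (u x.2 * v x.1)).re := fun x =>
    Complex.normSq_sub _ _
  rw [Finset.sum_congr rfl fun x _ => hpt x]
  rw [Finset.sum_sub_distrib, Finset.sum_add_distrib]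
  have h1 : ∑ x : Fin d × Fin d, normSq (u x.2 * v x.1)
      = ∑ x : Fin d × Fin d, normSq (u x.1 * v x.2) :=
    Fintype.sum_equiv (Equiv.prodComm _ _) _ _ fun x => rfl
  have h2 : ∑ x : Fin d × Fin d, ((u x.1 * v x.2) * (starRingEnd ℂ) (u x.2 * v x.1)).re
      = normSq (∑ i, u i * star (v i)) := by
    rw [← Complex.re_sum]
    have h3 : (∑ x : Fin d × Fin d, (u x.1 * v x.2) * (starRingEnd ℂ) (u x.2 * v x.1))
        = (∑ i, u i * star (v i)) * star (∑ i, u i * star (v i)) := by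
      rw [Fintype.sum_prod_type, star_sum, Finset.sum_mul_sum]
      refine Finset.sum_congr rfl fun i _ => Finset.sum_congr rfl fun j _ => ?_
      simp only [starRingEnd_apply, star_mul', star_star]
      ring
    rw [h3, ← starRingEnd_apply, Complex.mul_conj, Complex.ofReal_re]
  rw [h1, ← Finset.mul_sum, h2]
  have := Complex.normSq_nonneg (∑ i, u i * star (v i))
  linarith

lemma kron_vmv (d : ℕ) (u v : Fin d → ℂ) :
    vecMulVec u (star u) ⊗ₖ vecMulVec v (star v)
      = vecMulVec (fun x : Fin d × Fin d => u x.1 * v x.2)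
          (star (fun x : Fin d × Fin d => u x.1 * v x.2)) := by
  ext x y
  simp only [kroneckerMap_apply, vecMulVec_apply, Pi.star_apply, star_mul']
  ring

lemma kron_sum_sum {d m₁ m₂ : ℕ} (A : Fin m₁ → Matrix (Fin d) (Fin d) ℂ)
    (B : Fin m₂ → Matrix (Fin d) (Fin d) ℂ) :
    (∑ k, A k) ⊗ₖ (∑ l, B l) = ∑ k, ∑ l, A k ⊗ₖ B l := by
  ext x y
  simp only [kroneckerMap_apply, Matrix.sum_apply, Finset.sum_mul_sum]

lemma psd_decomp {d : ℕ} (p : Matrix (Fin d) (Fin d) ℂ) (hp : p.PosSemidef) :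
    ∃ (m : ℕ) (B : Fin m → (Fin d → ℂ)),
      p = ∑ k, vecMulVec (star (B k)) (star (star (B k))) := by
  obtain ⟨m, v, hv⟩ := Matrix.posSemidef_iff_eq_sum_vecMulVec.mp hp
  exact ⟨m, fun k => star (v k), by simpa only [star_star] using hv⟩

lemma master (d : ℕ) (hd : 2 < d) (lam : ℝ)
    (hlam1 : 1 / ((d : ℝ) * ((d : ℝ) - 1) - 1) ≤ lam) (u v : Fin d → ℂ) :
    ((lam : ℂ) • (((vecMulVec u (star u) ⊗ₖ vecMulVec v (star v)).trace)
          • (1 : Matrix (Fin d × Fin d) (Fin d × Fin d) ℂ)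
        - F0 d * (vecMulVec u (star u) ⊗ₖ vecMulVec v (star v)) * F0 d)
      - F0 d * (vecMulVec u (star u) ⊗ₖ vecMulVec v (star v)) * F0 d).PosSemidef := by
  rw [kron_vmv, rep]
  set w : Fin d × Fin d → ℂ := fun x => u x.1 * v x.2 with hw
  have hd3 : (3 : ℝ) ≤ (d : ℝ) := by exact_mod_cast hd
  set D : ℝ := (d : ℝ) * ((d : ℝ) - 1) with hD
  have hD6 : 6 ≤ D := by nlinarith
  have hD0 : 0 < D := by linarith
  have hDm1 : 0 < D - 1 := by linarith
  have hlam0 : 0 < lam := lt_of_lt_of_le (by positivity) hlam1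
  have hc : ((Real.sqrt (2 * d * (d - 1)))⁻¹) ^ 2 = (2 * D)⁻¹ := by
    rw [inv_pow, Real.sq_sqrt (by nlinarith)]
    congr 1
    ring
  apply psd_of_form
  · rw [hc]; positivity
  · -- the key bound
    have hMw : (1 - swapMatrix d) *ᵥ w = fun x : Fin d × Fin d => w x - w (x.2, x.1) := by
      funext x
      rw [sub_mulVec, one_mulVec]
      simp only [Pi.sub_apply, swap_mulVec]
    have hb : (∑ x : Fin d × Fin d, normSq (((1 - swapMatrix d) *ᵥ w) x))
        ≤ 2 * ∑ x : Fin d × Fin d, normSq (w x) := by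
      rw [hMw]
      exact sum_normSq_sub_swap d u v
    have hT : 0 ≤ ∑ x : Fin d × Fin d, normSq (w x) :=
      Finset.sum_nonneg fun x _ => normSq_nonneg _
    set T : ℝ := ∑ x : Fin d × Fin d, normSq (w x) with hTdef
    set S : ℝ := ∑ x : Fin d × Fin d, normSq (((1 - swapMatrix d) *ᵥ w) x) with hSdef
    have h1 : 1 ≤ lam * (D - 1) := by
      rw [div_le_iff₀ hDm1] at hlam1
      linarith
    rw [hc]
    have hβ : 0 ≤ (lam + 1) * (2 * D)⁻¹ := by positivity
    have e1 : (lam + 1) * (2 * D)⁻¹ * S ≤ (lam + 1) * (2 * D)⁻¹ * (2 * T) :=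
      mul_le_mul_of_nonneg_left hb hβ
    have e2 : (lam + 1) * (2 * D)⁻¹ * (2 * T) = (lam + 1) * T / D := by
      field_simp
    have e3 : (lam + 1) * T / D ≤ lam * T := by
      rw [div_le_iff₀ hD0]
      nlinarith
    linarith

end PhiAux

open PhiAux Complex

/-- For `d > 2` and `1/(d(d−1)−1) ≤ λ < 2/(d(d−1)−2)`, the map
`φ_λ(a) = λ(tr(a) I − F₀ a F₀) − F₀ a F₀` is positive on separable elements of
`M_d(ℂ) ⊗ M_d(ℂ)` but is not a positive map. -/
theorem positive_on_separable_but_not_positive (d : ℕ) (hd : 2 < d) (lam : ℝ)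
    (hlam1 : 1 / ((d : ℝ) * ((d : ℝ) - 1) - 1) ≤ lam)
    (hlam2 : lam < 2 / ((d : ℝ) * ((d : ℝ) - 1) - 2))
    (φ : Matrix (Fin d × Fin d) (Fin d × Fin d) ℂ →ₗ[ℂ]
      Matrix (Fin d × Fin d) (Fin d × Fin d) ℂ)
    (hφ : ∀ a, φ a = (lam : ℂ) •
        (a.trace • (1 : Matrix (Fin d × Fin d) (Fin d × Fin d) ℂ) - F0 d * a * F0 d)
      - F0 d * a * F0 d) :
    (∀ p q : Matrix (Fin d) (Fin d) ℂ, IsRankOneProj p → IsRankOneProj q →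
      (φ (p ⊗ₖ q)).PosSemidef)
    ∧
    (∀ σ : Matrix (Fin d × Fin d) (Fin d × Fin d) ℂ,
      σ.PosSemidef → SeparablePair σ → (φ σ).PosSemidef)
    ∧
    (∃ a : Matrix (Fin d × Fin d) (Fin d × Fin d) ℂ,
      a.PosSemidef ∧ ¬ (φ a).PosSemidef) := by
  -- the key positivity result for Kronecker products of PSD matrices
  have key : ∀ p q : Matrix (Fin d) (Fin d) ℂ, p.PosSemidef → q.PosSemidef →
      (φ (p ⊗ₖ q)).PosSemidef := by
    intro p q hp hq
    obtain ⟨m₁, B, hB⟩ := psd_decomp p hp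
    obtain ⟨m₂, C, hC⟩ := psd_decomp q hq
    rw [hB, hC, kron_sum_sum, map_sum]
    apply PhiAux.posSemidef_sum
    intro k _
    rw [map_sum]
    apply PhiAux.posSemidef_sum
    intro l _
    rw [hφ]
    exact master d hd lam hlam1 (star (B k)) (star (C l))
  refine ⟨?_, ?_, ?_⟩
  · -- part 1
    intro p q hp hq
    have hpp : p.PosSemidef := by
      have : p = pᴴ * p := by rw [hp.1.eq, hp.2.1]
      rw [this]
      exact Matrix.posSemidef_conjTranspose_mul_self p
    have hqq : q.PosSemidef := by
      have : q = qᴴ * q := by rw [hq.1.eq, hq.2.1]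
      rw [this]
      exact Matrix.posSemidef_conjTranspose_mul_self q
    exact key p q hpp hqq
  · -- part 2
    rintro σ _ ⟨m, σ₁, σ₂, h1, h2, rfl⟩
    rw [map_sum]
    apply PhiAux.posSemidef_sum
    intro t _
    exact key _ _ (h1 t) (h2 t)
  · -- part 3: the counterexample
    have hd3 : (3 : ℝ) ≤ (d : ℝ) := by exact_mod_cast hd
    set D : ℝ := (d : ℝ) * ((d : ℝ) - 1) with hD
    have hD6 : 6 ≤ D := by nlinarith
    have hD0 : 0 < D := by linarith
    have hDm1 : 0 < D - 1 := by linarith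
    have hlam0 : 0 < lam := lt_of_lt_of_le (by positivity) hlam1
    have hc : ((Real.sqrt (2 * d * (d - 1)))⁻¹) ^ 2 = (2 * D)⁻¹ := by
      rw [inv_pow, Real.sq_sqrt (by nlinarith)]
      congr 1
      ring
    set i0 : Fin d := ⟨0, by omega⟩ with hi0
    set i1 : Fin d := ⟨1, by omega⟩ with hi1
    have h01 : i0 ≠ i1 := by simp [hi0, hi1, Fin.ext_iff]
    set w : Fin d × Fin d → ℂ :=
      fun x => if x = (i0, i1) then 1 else if x = (i1, i0) then -1 else 0 with hwdef
    have hsw : ∀ x : Fin d × Fin d, w (x.2, x.1) = - w x := by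
      rintro ⟨a, b⟩
      simp only [hwdef, Prod.mk.injEq]
      by_cases h1 : a = i0 ∧ b = i1
      · obtain ⟨rfl, rfl⟩ := h1
        simp [h01, h01.symm]
      · by_cases h2 : a = i1 ∧ b = i0
        · obtain ⟨rfl, rfl⟩ := h2
          simp [h01, h01.symm]
        · have hn1 : ¬(a = i0 ∧ b = i1) := h1
          have hn2 : ¬(a = i1 ∧ b = i0) := h2
          have hn1' : ¬(b = i0 ∧ a = i1) := fun ⟨x, y⟩ => hn2 ⟨y, x⟩
          have hn2' : ¬(b = i1 ∧ a = i0) := fun ⟨x, y⟩ => hn1 ⟨y, x⟩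
          rw [if_neg (by tauto), if_neg (by tauto), if_neg (by tauto), if_neg (by tauto)]
          norm_num
    refine ⟨vecMulVec w (star w), posSemidef_vecMulVec w, ?_⟩
    intro hPSD
    have hval := hPSD.dotProduct_mulVec_nonneg w
    rw [hφ, rep, form_expand, Complex.zero_le_real] at hval
    set T : ℝ := ∑ x : Fin d × Fin d, normSq (w x) with hTdef
    have hT1 : 1 ≤ T := by
      have hle := Finset.single_le_sum (f := fun x : Fin d × Fin d => normSq (w x))
        (fun x _ => normSq_nonneg _) (Finset.mem_univ (i0, i1))
      have hw1 : w (i0, i1) = 1 := by simp [hwdef]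
      simpa [hw1] using hle
    have hMw : (1 - swapMatrix d) *ᵥ w = (2 : ℂ) • w := by
      funext x
      rw [sub_mulVec, one_mulVec]
      simp only [Pi.sub_apply, swap_mulVec, Pi.smul_apply, smul_eq_mul]
      rw [hsw x]
      ring
    have hdp : star ((1 - swapMatrix d) *ᵥ w) ⬝ᵥ w = ((2 * T : ℝ) : ℂ) := by
      rw [hMw, star_smul, smul_dotProduct, dotProduct_star_self]
      have hsum : (∑ i : Fin d × Fin d, normSq (w i)) = T := rfl
      rw [hsum]
      simp only [smul_eq_mul]
      push_cast
      simp
    rw [hdp] at hval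
    rw [Complex.normSq_ofReal] at hval
    rw [hc] at hval
    -- hval : 0 ≤ lam * T * T - (lam + 1) * (2 * D)⁻¹ * (2 * T * (2 * T))
    have h2lam : lam * (D - 2) < 2 := by
      rw [lt_div_iff₀ (by linarith : (0:ℝ) < D - 2)] at hlam2
      linarith
    have e2 : (lam + 1) * (2 * D)⁻¹ * (2 * T * (2 * T)) = 2 * (lam + 1) * T ^ 2 / D := by
      field_simp
    rw [e2] at hval
    rw [sub_nonneg, div_le_iff₀ hD0] at hval
    have hT2 : (0 : ℝ) < T ^ 2 := by nlinarith
    have h2lam' : lam * D < 2 * lam + 2 := by nlinarith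
    nlinarith [mul_lt_mul_of_pos_right h2lam' hT2]
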